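/- Let A = (a_ij) be an n×n real matrix that is positively stable (all eigenvalues have positive real part), and suppose there exist positive reals π₁,...,π_n with π_i a_ij = π_j a_ji for all i,j. Then the matrix B = (π_i a_ij) is symmetric and positive definite. -/

import Mathlib

open Matrix

/-- A real eigenvalue of a real matrix lies (as a complex number) in the complex
spectrum of the complexified matrix. -/
lemma real_spectrum_subset_aux {n : ℕ} (M : Matrix (Fin n) (Fin n) ℝ) {μ : ℝ}
    (h : μ ∈ spectrum ℝ M) : (μ : ℂ) ∈ spectrum ℂ (M.map Complex.ofReal) := by
  rw [spectrum.mem_iff] at h ⊢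
  intro hcontra
  apply h
  rw [Matrix.isUnit_iff_isUnit_det] at hcontra ⊢
  have hmap : (algebraMap ℂ (Matrix (Fin n) (Fin n) ℂ)) (μ : ℂ) - M.map Complex.ofReal
      = ((algebraMap ℝ (Matrix (Fin n) (Fin n) ℝ)) μ - M).map Complex.ofReal := by
    ext i j
    by_cases hij : i = j <;>
      simp [Matrix.algebraMap_matrix_apply, Matrix.map_apply, hij]
  have hdet : (((algebraMap ℝ (Matrix (Fin n) (Fin n) ℝ)) μ - M).map Complex.ofReal).det
      = Complex.ofReal (((algebraMap ℝ (Matrix (Fin n) (Fin n) ℝ)) μ - M).det) := by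
    exact (RingHom.map_det Complex.ofRealHom
      ((algebraMap ℝ (Matrix (Fin n) (Fin n) ℝ)) μ - M)).symm
  rw [hmap, hdet] at hcontra
  simp only [isUnit_iff_ne_zero] at hcontra ⊢
  intro h0
  apply hcontra
  rw [h0]
  simp

/-- A real symmetric matrix with positive eigenvalues is positive definite. -/
lemma posDef_of_eigenvalues_pos_aux {n : ℕ} {C : Matrix (Fin n) (Fin n) ℝ}
    (hC : C.IsHermitian) (h : ∀ i, 0 < hC.eigenvalues i) : C.PosDef := by
  set U : Matrix (Fin n) (Fin n) ℝ := (hC.eigenvectorUnitary : Matrix (Fin n) (Fin n) ℝ) with hU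
  set D : Matrix (Fin n) (Fin n) ℝ := Matrix.diagonal (RCLike.ofReal ∘ hC.eigenvalues) with hD
  have hDpos : D.PosDef := Matrix.PosDef.diagonal (fun i => by simpa using h i)
  have hUst : U * star U = 1 := (Matrix.mem_unitaryGroup_iff).mp hC.eigenvectorUnitary.2
  refine Matrix.PosDef.of_dotProduct_mulVec_pos hC fun x hx => ?_
  set y : Fin n → ℝ := (star U) *ᵥ x with hy
  have hyne : y ≠ 0 := by
    intro h0
    apply hx
    have : U *ᵥ y = U *ᵥ 0 := by rw [h0]
    rwa [hy, Matrix.mulVec_mulVec, hUst, Matrix.one_mulVec, Matrix.mulVec_zero] at this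
  have key : dotProduct (star x) (C *ᵥ x) = dotProduct (star y) (D *ᵥ y) := by
    conv_lhs => rw [hC.spectral_theorem, Unitary.conjStarAlgAut_apply]
    rw [← hD, ← hU]
    rw [Matrix.mul_assoc, ← Matrix.mulVec_mulVec, dotProduct_mulVec]
    congr 1
    · have hUt : Uᵀ = star U := by
        ext i j; simp [Matrix.conjTranspose_apply]
      have h2 : star x ᵥ* U = (star U) *ᵥ x := by
        rw [← Matrix.mulVec_transpose, hUt]
        simp
      rw [h2, hy]
      simp
    · rw [← Matrix.mulVec_mulVec]
  rw [key]
  exact hDpos.dotProduct_mulVec_pos hyne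

lemma map_mul_ofReal_aux {n : ℕ} (P Q : Matrix (Fin n) (Fin n) ℝ) :
    (P * Q).map Complex.ofReal = P.map Complex.ofReal * Q.map Complex.ofReal := by
  ext i j
  simp [Matrix.mul_apply, Matrix.map_apply]

lemma map_one_ofReal_aux {n : ℕ} :
    ((1 : Matrix (Fin n) (Fin n) ℝ)).map Complex.ofReal = 1 := by
  ext i j
  by_cases hij : i = j <;> simp [Matrix.one_apply, hij]

theorem detailed_balance_posdef
    {n : ℕ} (A : Matrix (Fin n) (Fin n) ℝ)
    (hstable : ∀ μ ∈ spectrum ℂ (A.map (Complex.ofReal)), 0 < μ.re)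
    (π : Fin n → ℝ) (hπ : ∀ i, 0 < π i)
    (hdb : ∀ i j, π i * A i j = π j * A j i) :
    (Matrix.of fun i j => π i * A i j).PosDef := by
  set s : Fin n → ℝ := fun i => Real.sqrt (π i) with hs
  have hspos : ∀ i, 0 < s i := fun i => Real.sqrt_pos.mpr (hπ i)
  have hsne : ∀ i, s i ≠ 0 := fun i => (hspos i).ne'
  have hsq : ∀ i, s i * s i = π i := fun i => Real.mul_self_sqrt (hπ i).le
  set S : Matrix (Fin n) (Fin n) ℝ := Matrix.diagonal s with hS
  set T : Matrix (Fin n) (Fin n) ℝ := Matrix.diagonal (fun i => (s i)⁻¹) with hT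
  have hST : S * T = 1 := by
    rw [hS, hT, Matrix.diagonal_mul_diagonal]
    rw [show (fun i => s i * (s i)⁻¹) = fun _ => (1:ℝ) from
      funext fun i => mul_inv_cancel₀ (hsne i)]
    exact Matrix.diagonal_one
  have hTS : T * S = 1 := by
    rw [hS, hT, Matrix.diagonal_mul_diagonal]
    rw [show (fun i => (s i)⁻¹ * s i) = fun _ => (1:ℝ) from
      funext fun i => inv_mul_cancel₀ (hsne i)]
    exact Matrix.diagonal_one
  set C : Matrix (Fin n) (Fin n) ℝ := Matrix.of fun i j => s i * A i j * (s j)⁻¹ with hC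
  have hCeq : C = S * A * T := by
    ext i j
    simp [hC, hS, hT, Matrix.mul_diagonal, Matrix.diagonal_mul]
  -- C is symmetric
  have hCherm : C.IsHermitian := by
    show C.conjTranspose = C
    ext i j
    simp only [hC, Matrix.conjTranspose_apply, Matrix.of_apply, star_trivial]
    field_simp [hsne i, hsne j]
    linear_combination hdb j i + A j i * (hsq j) - A i j * (hsq i)
  -- the complexified conjugation unit
  have hmapST : (S.map Complex.ofReal) * (T.map Complex.ofReal) = 1 := by
    rw [← map_mul_ofReal_aux, hST, map_one_ofReal_aux]
  have hmapTS : (T.map Complex.ofReal) * (S.map Complex.ofReal) = 1 := by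
    rw [← map_mul_ofReal_aux, hTS, map_one_ofReal_aux]
  set u : (Matrix (Fin n) (Fin n) ℂ)ˣ :=
    ⟨S.map Complex.ofReal, T.map Complex.ofReal, hmapST, hmapTS⟩ with hu
  have hspec : spectrum ℂ (C.map Complex.ofReal) = spectrum ℂ (A.map Complex.ofReal) := by
    have he : C.map Complex.ofReal
        = (u : Matrix (Fin n) (Fin n) ℂ) * (A.map Complex.ofReal)
          * ((u⁻¹ : (Matrix (Fin n) (Fin n) ℂ)ˣ) : Matrix (Fin n) (Fin n) ℂ) := by
      rw [hCeq, map_mul_ofReal_aux, map_mul_ofReal_aux]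
      rfl
    rw [he, spectrum.units_conjugate]
  -- eigenvalues of C are positive
  have heig : ∀ i, 0 < hCherm.eigenvalues i := by
    intro i
    have h1 := hCherm.eigenvalues_mem_spectrum_real i
    have h2 : ((hCherm.eigenvalues i : ℝ) : ℂ) ∈ spectrum ℂ (A.map Complex.ofReal) := by
      rw [← hspec]
      exact real_spectrum_subset_aux C h1
    have := hstable _ h2
    simpa using this
  have hCpos : C.PosDef := posDef_of_eigenvalues_pos_aux hCherm heig
  -- conclude
  refine Matrix.PosDef.of_dotProduct_mulVec_pos ?_ ?_
  · show Matrix.conjTranspose _ = _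
    ext i j
    simp only [Matrix.conjTranspose_apply, Matrix.of_apply, star_trivial]
    exact hdb j i
  · intro x hx
    set y : Fin n → ℝ := fun i => s i * x i with hy
    have hyne : y ≠ 0 := by
      intro h0
      apply hx
      funext i
      have := congrFun h0 i
      simp only [hy, Pi.zero_apply] at this
      exact (mul_eq_zero.mp this).resolve_left (hsne i)
    have key : dotProduct (star x) ((Matrix.of fun i j => π i * A i j) *ᵥ x)
        = dotProduct (star y) (C *ᵥ y) := by
      simp only [dotProduct, Matrix.mulVec, hC, hy, Matrix.of_apply,
        Pi.star_apply, star_trivial]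
      refine Finset.sum_congr rfl fun i _ => ?_
      rw [Finset.mul_sum, Finset.mul_sum]
      refine Finset.sum_congr rfl fun j _ => ?_
      have h : s i * x i * (s i * A i j * (s j)⁻¹ * (s j * x j))
          = (s i * s i) * (A i j * (x i * x j)) * ((s j)⁻¹ * s j) := by ring
      rw [h, inv_mul_cancel₀ (hsne j), hsq i]; ring
    rw [key]
    exact hCpos.dotProduct_mulVec_pos hyne
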